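/- arXiv:2009.07520 — 5 statements merged into one kernel-verified Lean document; each statement's English description precedes it below -/
import Mathlib

section
/- Let d ≤ n be positive integers, σ > 0, U ∈ St(d,n), Σ ∈ SPD(d), μ ∈ ℝ^d and b ∈ ℝ^n. With Σ̃ := ((1/σ²)(I_n − UUᵀ) + U Σ⁻¹ Uᵀ)⁻¹ and μ̃ := Σ̃ U Σ⁻¹ μ + b, one has Σ̃ U = U Σ; consequently Uᵀ Σ̃ U = Σ, Uᵀ Σ̃⁻¹ U = Σ⁻¹, and μ̃ = U μ + b. -/
open Matrix

theorem stmt_3 (d n : ℕ) (hd : 0 < d) (hn : 0 < n) (hdn : d ≤ n)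
    (σ : ℝ) (hσ : 0 < σ)
    (U : Matrix (Fin n) (Fin d) ℝ) (hU : Uᵀ * U = 1)
    (Sig : Matrix (Fin d) (Fin d) ℝ) (hSig : Sig.PosDef)
    (μ : Fin d → ℝ) (b : Fin n → ℝ)
    (tSig : Matrix (Fin n) (Fin n) ℝ)
    (htSig : tSig = ((σ ^ 2)⁻¹ • ((1 : Matrix (Fin n) (Fin n) ℝ) - U * Uᵀ) + U * Sig⁻¹ * Uᵀ)⁻¹)
    (tmu : Fin n → ℝ) (htmu : tmu = tSig *ᵥ (U *ᵥ (Sig⁻¹ *ᵥ μ)) + b) :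
    tSig * U = U * Sig ∧ Uᵀ * tSig * U = Sig ∧ Uᵀ * tSig⁻¹ * U = Sig⁻¹ ∧
      tmu = U *ᵥ μ + b := by
  have hSd : IsUnit Sig.det := isUnit_iff_ne_zero.2 hSig.det_pos.ne'
  have hSinv : Sig⁻¹ * Sig = 1 := Matrix.nonsing_inv_mul _ hSd
  have hSinv' : Sig * Sig⁻¹ = 1 := Matrix.mul_nonsing_inv _ hSd
  set A : Matrix (Fin n) (Fin n) ℝ :=
    (σ ^ 2)⁻¹ • ((1 : Matrix (Fin n) (Fin n) ℝ) - U * Uᵀ) + U * Sig⁻¹ * Uᵀ with hA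
  set B : Matrix (Fin n) (Fin n) ℝ :=
    (σ ^ 2) • ((1 : Matrix (Fin n) (Fin n) ℝ) - U * Uᵀ) + U * Sig * Uᵀ with hB
  have hσ2 : (σ ^ 2)⁻¹ * σ ^ 2 = 1 := inv_mul_cancel₀ (by positivity)
  have hUUU : U * Uᵀ * U = U := by
    rw [Matrix.mul_assoc, hU, Matrix.mul_one]
  have h0 : ((1 : Matrix (Fin n) (Fin n) ℝ) - U * Uᵀ) * U = 0 := by
    rw [Matrix.sub_mul, Matrix.one_mul, hUUU, sub_self]
  have h0' : Uᵀ * ((1 : Matrix (Fin n) (Fin n) ℝ) - U * Uᵀ) = 0 := by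
    rw [Matrix.mul_sub, Matrix.mul_one, ← Matrix.mul_assoc, hU, Matrix.one_mul, sub_self]
  have hP : ((1 : Matrix (Fin n) (Fin n) ℝ) - U * Uᵀ) * (1 - U * Uᵀ) = 1 - U * Uᵀ := by
    rw [Matrix.mul_sub, Matrix.mul_one, ← Matrix.mul_assoc, h0, Matrix.zero_mul, sub_zero]
  have e1 : ((1 : Matrix (Fin n) (Fin n) ℝ) - U * Uᵀ) * (U * Sig * Uᵀ) = 0 := by
    rw [← Matrix.mul_assoc, ← Matrix.mul_assoc, h0, Matrix.zero_mul, Matrix.zero_mul]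
  have e2 : U * Sig⁻¹ * Uᵀ * ((1 : Matrix (Fin n) (Fin n) ℝ) - U * Uᵀ) = 0 := by
    rw [Matrix.mul_assoc, h0', Matrix.mul_zero]
  have e3 : U * Sig⁻¹ * Uᵀ * (U * Sig * Uᵀ) = U * Uᵀ := by
    calc U * Sig⁻¹ * Uᵀ * (U * Sig * Uᵀ)
        = U * (Sig⁻¹ * ((Uᵀ * U) * Sig)) * Uᵀ := by
          simp only [Matrix.mul_assoc]
      _ = U * Uᵀ := by
          rw [hU, Matrix.one_mul, hSinv, Matrix.mul_one]
  have hAB : A * B = 1 := by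
    rw [hA, hB, Matrix.add_mul, Matrix.mul_add, Matrix.mul_add, Matrix.smul_mul,
      Matrix.smul_mul, Matrix.mul_smul, Matrix.mul_smul, smul_smul, hσ2, one_smul, hP,
      e1, e2, e3, smul_zero, smul_zero, add_zero, zero_add, sub_add_cancel]
  have hAdet : IsUnit A.det := Matrix.isUnit_det_of_right_inverse hAB
  have hAinv : A⁻¹ = B := Matrix.inv_eq_right_inv hAB
  have htS : tSig = B := by rw [htSig, hAinv]
  have h1 : tSig * U = U * Sig := by
    rw [htS, hB, Matrix.add_mul, Matrix.smul_mul, h0, smul_zero, zero_add, Matrix.mul_assoc,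
      Matrix.mul_assoc, hU, Matrix.mul_one]
  refine ⟨h1, ?_, ?_, ?_⟩
  · rw [Matrix.mul_assoc, h1, ← Matrix.mul_assoc, hU, Matrix.one_mul]
  · have hti : tSig⁻¹ = A := by rw [htSig, Matrix.nonsing_inv_nonsing_inv _ hAdet]
    rw [Matrix.mul_assoc, hti, hA, Matrix.add_mul, Matrix.smul_mul, h0, smul_zero, zero_add,
      show U * Sig⁻¹ * Uᵀ * U = U * Sig⁻¹ from by rw [Matrix.mul_assoc, hU, Matrix.mul_one],
      ← Matrix.mul_assoc, hU, Matrix.one_mul]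
  · rw [htmu, Matrix.mulVec_mulVec, Matrix.mulVec_mulVec, h1,
      Matrix.mul_assoc, hSinv', Matrix.mul_one]
end

section
/- Let d ≤ n be positive integers, σ > 0, U ∈ St(d,n), Σ ∈ SPD(d), μ ∈ ℝ^d and b ∈ ℝ^n, and set Σ̃ := ((1/σ²)(I_n − UUᵀ) + U Σ⁻¹ Uᵀ)⁻¹, μ̃ := Σ̃ U Σ⁻¹ μ + b. Then for every x ∈ ℝ^n: (1/σ²)‖(I_n − UUᵀ)(x − b)‖² + (Uᵀ(x − b) − μ)ᵀ Σ⁻¹ (Uᵀ(x − b) − μ) = (x − μ̃)ᵀ Σ̃⁻¹ (x − μ̃). -/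
open Matrix

theorem stmt_4 (d n : ℕ) (hd : 0 < d) (hn : 0 < n) (hdn : d ≤ n)
    (σ : ℝ) (hσ : 0 < σ)
    (U : Matrix (Fin n) (Fin d) ℝ) (hU : Uᵀ * U = 1)
    (Sig : Matrix (Fin d) (Fin d) ℝ) (hSig : Sig.PosDef)
    (μ : Fin d → ℝ) (b : Fin n → ℝ)
    (tSig : Matrix (Fin n) (Fin n) ℝ)
    (htSig : tSig = ((σ ^ 2)⁻¹ • ((1 : Matrix (Fin n) (Fin n) ℝ) - U * Uᵀ) + U * Sig⁻¹ * Uᵀ)⁻¹)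
    (tmu : Fin n → ℝ) (htmu : tmu = tSig *ᵥ (U *ᵥ (Sig⁻¹ *ᵥ μ)) + b)
    (x : Fin n → ℝ) :
    (σ ^ 2)⁻¹ * ((((1 : Matrix (Fin n) (Fin n) ℝ) - U * Uᵀ) *ᵥ (x - b)) ⬝ᵥ
        (((1 : Matrix (Fin n) (Fin n) ℝ) - U * Uᵀ) *ᵥ (x - b)))
      + (Uᵀ *ᵥ (x - b) - μ) ⬝ᵥ (Sig⁻¹ *ᵥ (Uᵀ *ᵥ (x - b) - μ))
      = (x - tmu) ⬝ᵥ (tSig⁻¹ *ᵥ (x - tmu)) := by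
  have hσ2 : (σ ^ 2) ≠ 0 := by positivity
  set P : Matrix (Fin n) (Fin n) ℝ := (1 : Matrix (Fin n) (Fin n) ℝ) - U * Uᵀ with hPdef
  set A : Matrix (Fin n) (Fin n) ℝ := (σ ^ 2)⁻¹ • P + U * Sig⁻¹ * Uᵀ with hAdef
  set B : Matrix (Fin n) (Fin n) ℝ := (σ ^ 2) • P + U * Sig * Uᵀ with hBdef
  have hSigUnit : IsUnit Sig := hSig.isUnit
  have hSinv : Sig⁻¹ * Sig = 1 := nonsing_inv_mul _ (isUnit_iff_isUnit_det _ |>.1 hSigUnit)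
  have hSinv' : Sig * Sig⁻¹ = 1 := mul_nonsing_inv _ (isUnit_iff_isUnit_det _ |>.1 hSigUnit)
  have hSymS : (Sig⁻¹)ᵀ = Sig⁻¹ := by
    have := hSig.isHermitian.inv
    simpa [Matrix.IsHermitian, Matrix.conjTranspose_eq_transpose_of_trivial] using this
  -- projection facts
  have hPU : P * U = 0 := by
    simp [hPdef, Matrix.sub_mul, Matrix.mul_assoc, hU]
  have hUP : Uᵀ * P = 0 := by
    simp [hPdef, Matrix.mul_sub, ← Matrix.mul_assoc, hU]
  have hPP : P * P = P := by
    have h : P * P = P - (P * U) * Uᵀ := by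
      rw [hPdef]
      simp only [Matrix.mul_sub, Matrix.mul_one, Matrix.sub_mul, Matrix.one_mul,
        Matrix.mul_assoc]
    rw [h, hPU]; simp
  have hPT : Pᵀ = P := by
    simp [hPdef, Matrix.transpose_sub, Matrix.transpose_mul]
  have hAT : Aᵀ = A := by
    simp [hAdef, Matrix.transpose_add, Matrix.transpose_smul, hPT, Matrix.transpose_mul,
      hSymS, Matrix.mul_assoc]
  -- A * B = 1
  have hUtB : Uᵀ * (U * Sig * Uᵀ) = Sig * Uᵀ := by
    rw [← Matrix.mul_assoc, ← Matrix.mul_assoc, hU, Matrix.one_mul]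
  have h3 : (U * Sig⁻¹ * Uᵀ) * (U * Sig * Uᵀ) = U * Uᵀ := by
    rw [Matrix.mul_assoc (U * Sig⁻¹) Uᵀ _, hUtB, Matrix.mul_assoc U Sig⁻¹ (Sig * Uᵀ),
      ← Matrix.mul_assoc Sig⁻¹ Sig Uᵀ, hSinv, Matrix.one_mul]
  have hAB : A * B = 1 := by
    have expand : A * B = P * P + (σ ^ 2)⁻¹ • (P * (U * Sig * Uᵀ))
        + (σ ^ 2) • ((U * Sig⁻¹ * Uᵀ) * P) + (U * Sig⁻¹ * Uᵀ) * (U * Sig * Uᵀ) := by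
      simp only [hAdef, hBdef, Matrix.add_mul, Matrix.mul_add, Matrix.smul_mul,
        Matrix.mul_smul, smul_add, smul_smul, inv_mul_cancel₀ hσ2, mul_inv_cancel₀ hσ2,
        one_smul]
      abel
    have h1 : P * (U * Sig * Uᵀ) = 0 := by
      rw [← Matrix.mul_assoc, ← Matrix.mul_assoc, hPU]; simp
    have h2 : (U * Sig⁻¹ * Uᵀ) * P = 0 := by
      rw [Matrix.mul_assoc, hUP]; simp
    rw [expand, hPP, h1, h2, h3]
    simp [hPdef]
  have hBA : B * A = 1 := mul_eq_one_comm.mp hAB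
  have htS : tSig = B := by rw [htSig]; exact inv_eq_right_inv hAB
  have htSi : tSig⁻¹ = A := by rw [htS]; exact inv_eq_right_inv hBA
  have hBU : B * U = U * Sig := by
    simp only [hBdef, Matrix.add_mul, Matrix.smul_mul, hPU, smul_zero, zero_add,
      Matrix.mul_assoc, hU, Matrix.mul_one]
  have htmu' : tmu = U *ᵥ μ + b := by
    rw [htmu, htS, mulVec_mulVec, mulVec_mulVec, hBU, Matrix.mul_assoc, hSinv',
      Matrix.mul_one]
  have hAU : A * U = U * Sig⁻¹ := by
    simp only [hAdef, Matrix.add_mul, Matrix.smul_mul, hPU, smul_zero, zero_add,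
      Matrix.mul_assoc, hU, Matrix.mul_one]
  -- helpers
  have hgen : ∀ (w : Fin d → ℝ) (v : Fin n → ℝ), (U *ᵥ w) ⬝ᵥ v = w ⬝ᵥ (Uᵀ *ᵥ v) := by
    intro w v
    rw [dotProduct_comm, Matrix.dotProduct_mulVec, ← Matrix.mulVec_transpose, dotProduct_comm]
  have hgen2 : ∀ (w : Fin d → ℝ) (v : Fin n → ℝ), v ⬝ᵥ (U *ᵥ w) = (Uᵀ *ᵥ v) ⬝ᵥ w := by
    intro w v
    rw [Matrix.dotProduct_mulVec, ← Matrix.mulVec_transpose]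
  have hsymm : ∀ (M : Matrix (Fin n) (Fin n) ℝ) (u v : Fin n → ℝ), Mᵀ = M →
      u ⬝ᵥ (M *ᵥ v) = v ⬝ᵥ (M *ᵥ u) := by
    intro M u v hM
    rw [Matrix.dotProduct_mulVec, ← Matrix.mulVec_transpose, hM, dotProduct_comm]
  have hsymm' : ∀ (u v : Fin d → ℝ), u ⬝ᵥ (Sig⁻¹ *ᵥ v) = v ⬝ᵥ (Sig⁻¹ *ᵥ u) := by
    intro u v
    rw [Matrix.dotProduct_mulVec, ← Matrix.mulVec_transpose, hSymS, dotProduct_comm]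
  -- use opaque y
  obtain ⟨y, hy⟩ : ∃ y : Fin n → ℝ, y = x - b := ⟨_, rfl⟩
  have hxt : x - tmu = y - U *ᵥ μ := by rw [htmu', hy]; abel
  rw [htSi, hxt, ← hy]
  -- RHS expansion
  have hAUμ : A *ᵥ (U *ᵥ μ) = U *ᵥ (Sig⁻¹ *ᵥ μ) := by
    rw [mulVec_mulVec, mulVec_mulVec, hAU]
  have hcross : (U *ᵥ μ) ⬝ᵥ (A *ᵥ y) = y ⬝ᵥ (U *ᵥ (Sig⁻¹ *ᵥ μ)) := by
    rw [hsymm A (U *ᵥ μ) y hAT, hAUμ]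
  have hlast : (U *ᵥ μ) ⬝ᵥ (U *ᵥ (Sig⁻¹ *ᵥ μ)) = μ ⬝ᵥ (Sig⁻¹ *ᵥ μ) := by
    rw [hgen, mulVec_mulVec, mulVec_mulVec, hU, Matrix.one_mul]
  have key1 : (y - U *ᵥ μ) ⬝ᵥ (A *ᵥ (y - U *ᵥ μ))
      = y ⬝ᵥ (A *ᵥ y) - 2 * (y ⬝ᵥ (U *ᵥ (Sig⁻¹ *ᵥ μ))) + μ ⬝ᵥ (Sig⁻¹ *ᵥ μ) := by
    rw [Matrix.mulVec_sub, hAUμ, dotProduct_sub, sub_dotProduct, sub_dotProduct,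
      hcross, hlast]
    ring
  rw [key1]
  -- LHS pieces
  have hP1 : (P *ᵥ y) ⬝ᵥ (P *ᵥ y) = y ⬝ᵥ (P *ᵥ y) := by
    rw [Matrix.dotProduct_mulVec, ← Matrix.mulVec_transpose, hPT, mulVec_mulVec, hPP,
      dotProduct_comm]
  have hAy : y ⬝ᵥ (A *ᵥ y) = (σ ^ 2)⁻¹ * (y ⬝ᵥ (P *ᵥ y))
      + (Uᵀ *ᵥ y) ⬝ᵥ (Sig⁻¹ *ᵥ (Uᵀ *ᵥ y)) := by
    rw [hAdef, Matrix.add_mulVec, dotProduct_add, Matrix.smul_mulVec,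
      dotProduct_smul, smul_eq_mul]
    congr 1
    rw [← mulVec_mulVec, ← mulVec_mulVec, hgen2]
  have h1 : (Uᵀ *ᵥ y) ⬝ᵥ (Sig⁻¹ *ᵥ μ) = y ⬝ᵥ (U *ᵥ (Sig⁻¹ *ᵥ μ)) := (hgen2 _ _).symm
  have h2 : μ ⬝ᵥ (Sig⁻¹ *ᵥ (Uᵀ *ᵥ y)) = y ⬝ᵥ (U *ᵥ (Sig⁻¹ *ᵥ μ)) := by
    rw [hsymm' μ (Uᵀ *ᵥ y), h1]
  have hL2 : (Uᵀ *ᵥ y - μ) ⬝ᵥ (Sig⁻¹ *ᵥ (Uᵀ *ᵥ y - μ))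
      = (Uᵀ *ᵥ y) ⬝ᵥ (Sig⁻¹ *ᵥ (Uᵀ *ᵥ y)) - 2 * (y ⬝ᵥ (U *ᵥ (Sig⁻¹ *ᵥ μ)))
        + μ ⬝ᵥ (Sig⁻¹ *ᵥ μ) := by
    rw [Matrix.mulVec_sub, dotProduct_sub, sub_dotProduct, sub_dotProduct, h1, h2]
    ring
  rw [hP1, hAy, hL2]
  ring
end

section
/- Let d ≤ n be positive integers, σ > 0, U ∈ St(d,n), Σ ∈ SPD(d), μ ∈ ℝ^d and b ∈ ℝ^n, and set Σ̃ := ((1/σ²)(I_n − UUᵀ) + U Σ⁻¹ Uᵀ)⁻¹, μ̃ := Σ̃ U Σ⁻¹ μ + b. Then for every x ∈ ℝ^n: f(Uᵀ(x − b) | μ, Σ) · exp(−(1/(2σ²))‖(I_n − UUᵀ)(x − b)‖²) = (2πσ²)^{(n−d)/2} · f(x | μ̃, Σ̃). -/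
open Matrix

/-- The Gaussian density `f(x | μ, Σ)` in dimension `k`. -/
noncomputable def gaussDensity {k : ℕ} (x μ : Fin k → ℝ) (S : Matrix (Fin k) (Fin k) ℝ) : ℝ :=
  (2 * Real.pi) ^ (-(k : ℝ) / 2) * S.det ^ (-(1 : ℝ) / 2) *
    Real.exp (-(1 / 2) * ((x - μ) ⬝ᵥ (S⁻¹ *ᵥ (x - μ))))

private lemma dotmv {m k : ℕ} (M : Matrix (Fin m) (Fin k) ℝ) (a : Fin m → ℝ) (c : Fin k → ℝ) :
    a ⬝ᵥ (M *ᵥ c) = (Mᵀ *ᵥ a) ⬝ᵥ c := by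
  rw [Matrix.dotProduct_mulVec, ← Matrix.mulVec_transpose]

theorem stmt_5 (d n : ℕ) (hd : 0 < d) (hn : 0 < n) (hdn : d ≤ n)
    (σ : ℝ) (hσ : 0 < σ)
    (U : Matrix (Fin n) (Fin d) ℝ) (hU : Uᵀ * U = 1)
    (Sig : Matrix (Fin d) (Fin d) ℝ) (hSig : Sig.PosDef)
    (μ : Fin d → ℝ) (b : Fin n → ℝ)
    (tSig : Matrix (Fin n) (Fin n) ℝ)
    (htSig : tSig = ((σ ^ 2)⁻¹ • ((1 : Matrix (Fin n) (Fin n) ℝ) - U * Uᵀ) + U * Sig⁻¹ * Uᵀ)⁻¹)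
    (tmu : Fin n → ℝ) (htmu : tmu = tSig *ᵥ (U *ᵥ (Sig⁻¹ *ᵥ μ)) + b)
    (x : Fin n → ℝ) :
    gaussDensity (Uᵀ *ᵥ (x - b)) μ Sig *
        Real.exp (-(1 / (2 * σ ^ 2)) * ((((1 : Matrix (Fin n) (Fin n) ℝ) - U * Uᵀ) *ᵥ (x - b)) ⬝ᵥ
          (((1 : Matrix (Fin n) (Fin n) ℝ) - U * Uᵀ) *ᵥ (x - b))))
      = (2 * Real.pi * σ ^ 2) ^ (((n : ℝ) - (d : ℝ)) / 2) * gaussDensity x tmu tSig := by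
  have hs : (0:ℝ) < σ ^ 2 := by positivity
  have hs0 : (σ:ℝ) ^ 2 ≠ 0 := hs.ne'
  set Q : Matrix (Fin n) (Fin n) ℝ := 1 - U * Uᵀ with hQdef
  set A : Matrix (Fin n) (Fin n) ℝ := (σ ^ 2)⁻¹ • Q + U * Sig⁻¹ * Uᵀ with hAdef
  set B : Matrix (Fin n) (Fin n) ℝ := (σ ^ 2) • Q + U * Sig * Uᵀ with hBdef
  -- basic facts on Sig
  have hSd : IsUnit Sig.det := isUnit_iff_ne_zero.2 hSig.det_pos.ne'
  have hSymm : Sigᵀ = Sig := hSig.1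
  have hSiSymm : (Sig⁻¹)ᵀ = Sig⁻¹ := by rw [Matrix.transpose_nonsing_inv, hSymm]
  have hSinv : Sig * Sig⁻¹ = 1 := Matrix.mul_nonsing_inv Sig hSd
  have hSinv' : Sig⁻¹ * Sig = 1 := Matrix.nonsing_inv_mul Sig hSd
  -- projection facts
  have hQU : Q * U = 0 := by
    rw [hQdef, Matrix.sub_mul, Matrix.one_mul, Matrix.mul_assoc, hU, Matrix.mul_one, sub_self]
  have hUQ : Uᵀ * Q = 0 := by
    rw [hQdef, Matrix.mul_sub, Matrix.mul_one, ← Matrix.mul_assoc, hU, Matrix.one_mul, sub_self]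
  have hQsymm : Qᵀ = Q := by
    rw [hQdef, Matrix.transpose_sub, Matrix.transpose_one, Matrix.transpose_mul,
      Matrix.transpose_transpose]
  have hQQ : Q * Q = Q := by
    nth_rewrite 2 [hQdef]
    rw [Matrix.mul_sub, Matrix.mul_one, ← Matrix.mul_assoc, hQU, Matrix.zero_mul, sub_zero]
  have hAB : A * B = 1 := by
    have h2 : Q * (U * Sig * Uᵀ) = 0 := by
      rw [← Matrix.mul_assoc, ← Matrix.mul_assoc, hQU, Matrix.zero_mul, Matrix.zero_mul]
    have h3 : U * Sig⁻¹ * Uᵀ * Q = 0 := by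
      rw [Matrix.mul_assoc, hUQ, Matrix.mul_zero]
    have h4 : U * Sig⁻¹ * Uᵀ * (U * Sig * Uᵀ) = U * Uᵀ := by
      simp only [Matrix.mul_assoc]
      rw [← Matrix.mul_assoc Uᵀ U, hU, Matrix.one_mul, ← Matrix.mul_assoc Sig⁻¹ Sig,
        hSinv', Matrix.one_mul]
    rw [hAdef, hBdef]
    simp only [Matrix.add_mul, Matrix.mul_add, Matrix.smul_mul, Matrix.mul_smul, smul_smul]
    rw [hQQ, h2, h3, h4, smul_zero, add_zero, zero_add, smul_smul,
      mul_inv_cancel₀ hs0, one_smul, hQdef, sub_add_cancel]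
  have hBA : B * A = 1 := mul_eq_one_comm.mp hAB
  have htSigB : tSig = B := by rw [htSig, Matrix.inv_eq_right_inv hAB]
  have htSiginv : tSig⁻¹ = A := by rw [htSigB, Matrix.inv_eq_right_inv hBA]
  -- determinant
  set D : Matrix (Fin d) (Fin n) ℝ := (σ ^ 2)⁻¹ • ((Sig - (σ ^ 2) • 1) * Uᵀ) with hDdef
  have hB2 : B = (σ ^ 2) • (1 + U * D) := by
    have hUD : (σ ^ 2) • (U * D) = U * Sig * Uᵀ - (σ ^ 2) • (U * Uᵀ) := by
      rw [hDdef, Matrix.mul_smul, smul_smul, mul_inv_cancel₀ hs0, one_smul,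
        Matrix.sub_mul, Matrix.smul_mul, Matrix.one_mul, Matrix.mul_sub,
        Matrix.mul_smul, ← Matrix.mul_assoc]
    rw [hBdef, hQdef, smul_add, hUD, smul_sub]
    abel
  have hDU : 1 + D * U = (σ ^ 2)⁻¹ • Sig := by
    rw [hDdef, Matrix.smul_mul, Matrix.mul_assoc, hU, Matrix.mul_one, smul_sub, smul_smul,
      inv_mul_cancel₀ hs0, one_smul]
    abel
  have hdetB : B.det = (σ ^ 2) ^ n * ((σ ^ 2) ^ d)⁻¹ * Sig.det := by
    rw [hB2, Matrix.det_smul, Matrix.det_one_add_mul_comm, hDU, Matrix.det_smul,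
      Fintype.card_fin, Fintype.card_fin, inv_pow]
    ring
  have hdet_pos : (0:ℝ) < tSig.det := by
    rw [htSigB, hdetB]
    have := hSig.det_pos
    positivity
  -- vectors
  set y : Fin n → ℝ := x - b with hy
  clear_value y
  set w : Fin d → ℝ := Sig⁻¹ *ᵥ μ with hw
  clear_value w
  set v : Fin n → ℝ := U *ᵥ w with hv
  clear_value v
  have hAsymm : Aᵀ = A := by
    rw [hAdef, Matrix.transpose_add, Matrix.transpose_smul, hQsymm,
      Matrix.transpose_mul, Matrix.transpose_mul, Matrix.transpose_transpose, hSiSymm,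
      Matrix.mul_assoc]
  have h1 : (Uᵀ *ᵥ y - μ) ⬝ᵥ (Sig⁻¹ *ᵥ (Uᵀ *ᵥ y - μ))
      = y ⬝ᵥ ((U * Sig⁻¹ * Uᵀ) *ᵥ y) - 2 * (y ⬝ᵥ v) + μ ⬝ᵥ (Sig⁻¹ *ᵥ μ) := by
    have ha : (Uᵀ *ᵥ y) ⬝ᵥ (Sig⁻¹ *ᵥ (Uᵀ *ᵥ y)) = y ⬝ᵥ ((U * Sig⁻¹ * Uᵀ) *ᵥ y) := by
      rw [mulVec_mulVec, ← dotmv U y ((Sig⁻¹ * Uᵀ) *ᵥ y), mulVec_mulVec, ← Matrix.mul_assoc]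
    have hb : (Uᵀ *ᵥ y) ⬝ᵥ (Sig⁻¹ *ᵥ μ) = y ⬝ᵥ v := by
      rw [hv, hw, ← dotmv U y (Sig⁻¹ *ᵥ μ)]
    have hc : μ ⬝ᵥ (Sig⁻¹ *ᵥ (Uᵀ *ᵥ y)) = y ⬝ᵥ v := by
      rw [dotmv Sig⁻¹ μ, hSiSymm, dotmv Uᵀ _ y, Matrix.transpose_transpose,
        dotProduct_comm, hv, hw]
    rw [Matrix.mulVec_sub, sub_dotProduct, dotProduct_sub, dotProduct_sub, ha, hb, hc]
    ring
  have h2 : (Q *ᵥ y) ⬝ᵥ (Q *ᵥ y) = y ⬝ᵥ (Q *ᵥ y) := by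
    rw [dotmv Q _ y, hQsymm, mulVec_mulVec, hQQ, dotProduct_comm]
  have hBv : B *ᵥ v = U *ᵥ μ := by
    have hBU : B * U = U * Sig := by
      rw [hBdef, Matrix.add_mul, Matrix.smul_mul, hQU, smul_zero,
        Matrix.mul_assoc (U * Sig) Uᵀ U, hU, Matrix.mul_one, zero_add]
    rw [hv, hw, mulVec_mulVec, hBU, mulVec_mulVec, Matrix.mul_assoc, hSinv, Matrix.mul_one]
  have h3 : (y - B *ᵥ v) ⬝ᵥ (A *ᵥ (y - B *ᵥ v))
      = y ⬝ᵥ (A *ᵥ y) - 2 * (y ⬝ᵥ v) + μ ⬝ᵥ (Sig⁻¹ *ᵥ μ) := by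
    have hABv : A *ᵥ (B *ᵥ v) = v := by rw [mulVec_mulVec, hAB, Matrix.one_mulVec]
    have hca : y ⬝ᵥ (A *ᵥ (B *ᵥ v)) = y ⬝ᵥ v := by rw [hABv]
    have hcb : (B *ᵥ v) ⬝ᵥ (A *ᵥ y) = y ⬝ᵥ v := by
      rw [dotmv A _ y, hAsymm, hABv, dotProduct_comm]
    have hcc : (B *ᵥ v) ⬝ᵥ (A *ᵥ (B *ᵥ v)) = μ ⬝ᵥ (Sig⁻¹ *ᵥ μ) := by
      rw [hABv, hBv, hv, dotmv U (U *ᵥ μ) w, mulVec_mulVec, hU, Matrix.one_mulVec, hw]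
    rw [Matrix.mulVec_sub, sub_dotProduct, dotProduct_sub, dotProduct_sub, hca, hcb, hcc]
    ring
  have h4 : y ⬝ᵥ (A *ᵥ y)
      = (σ ^ 2)⁻¹ * (y ⬝ᵥ (Q *ᵥ y)) + y ⬝ᵥ ((U * Sig⁻¹ * Uᵀ) *ᵥ y) := by
    rw [hAdef, Matrix.add_mulVec, Matrix.smul_mulVec, dotProduct_add, dotProduct_smul,
      smul_eq_mul]
  have hxt : x - tmu = y - B *ᵥ v := by
    rw [htmu, htSigB, hy]; abel
  -- exponent equality
  have hexp : -(1/2 : ℝ) * ((Uᵀ *ᵥ y - μ) ⬝ᵥ (Sig⁻¹ *ᵥ (Uᵀ *ᵥ y - μ)))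
        + -(1 / (2 * σ ^ 2)) * ((Q *ᵥ y) ⬝ᵥ (Q *ᵥ y))
      = -(1/2 : ℝ) * ((y - B *ᵥ v) ⬝ᵥ (A *ᵥ (y - B *ᵥ v))) := by
    rw [h1, h2, h3, h4]
    field_simp
    ring
  -- constant equality
  have hπ : (0:ℝ) < 2 * Real.pi := by positivity
  have hconst : (2 * Real.pi) ^ (-(d : ℝ) / 2) * Sig.det ^ (-(1:ℝ) / 2)
      = (2 * Real.pi * σ ^ 2) ^ (((n : ℝ) - (d : ℝ)) / 2)
        * ((2 * Real.pi) ^ (-(n : ℝ) / 2) * tSig.det ^ (-(1:ℝ) / 2)) := by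
    have hdp := hSig.det_pos
    rw [htSigB, hdetB]
    have hbig : (0:ℝ) < (σ ^ 2) ^ n * ((σ ^ 2) ^ d)⁻¹ * Sig.det := by positivity
    rw [Real.rpow_def_of_pos hπ, Real.rpow_def_of_pos hdp,
      Real.rpow_def_of_pos (by positivity : (0:ℝ) < 2 * Real.pi * σ ^ 2),
      Real.rpow_def_of_pos hπ, Real.rpow_def_of_pos hbig,
      ← Real.exp_add, ← Real.exp_add, ← Real.exp_add, Real.exp_eq_exp,
      Real.log_mul hπ.ne' hs0,
      Real.log_mul (by positivity : ((σ ^ 2:ℝ) ^ n * (((σ:ℝ) ^ 2) ^ d)⁻¹) ≠ 0) hdp.ne',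
      Real.log_mul (by positivity : (((σ:ℝ) ^ 2) ^ n) ≠ 0)
        (by positivity : ((((σ:ℝ) ^ 2) ^ d)⁻¹) ≠ 0),
      Real.log_inv, Real.log_pow, Real.log_pow]
    simp only [Real.log_pow]
    push_cast
    ring
  -- assemble
  rw [gaussDensity, gaussDensity, htSiginv, hxt, hconst, mul_assoc, mul_assoc,
    ← Real.exp_add, hexp]
end

section
/- Let d ≤ n be positive integers and σ > 0. Then the set { ((1/σ²)(I_n − UUᵀ) + U Σ⁻¹ Uᵀ)⁻¹ : U ∈ St(d,n), Σ ∈ SPD(d) } equals the set { Qᵀ D Q : Q ∈ O(n), λ ∈ ℝ^d with all entries positive }, where D is the block-diagonal n×n matrix with upper-left d×d block diag(λ₁,…,λ_d) and lower-right (n−d)×(n−d) block σ² I_{n−d}. -/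
open Matrix

namespace Stmt6Aux

/-- The `n × d` "inclusion" matrix. -/
def E (d n : ℕ) : Matrix (Fin n) (Fin d) ℝ :=
  fun i j => if (i : ℕ) = (j : ℕ) then 1 else 0

lemma EtE {d n : ℕ} (hdn : d ≤ n) : (E d n)ᵀ * E d n = (1 : Matrix (Fin d) (Fin d) ℝ) := by
  ext j j'
  simp only [mul_apply, transpose_apply, E, one_apply]
  rw [Finset.sum_eq_single (Fin.castLE hdn j)]
  · simp [Fin.ext_iff]
  · intro i _ hi
    rw [if_neg, zero_mul]
    intro h
    exact hi (by simpa [Fin.ext_iff] using h)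
  · simp

lemma EdE {d n : ℕ} (v : Fin d → ℝ) :
    E d n * diagonal v * (E d n)ᵀ
      = diagonal (fun i : Fin n => if h : (i : ℕ) < d then v ⟨i, h⟩ else 0) := by
  ext i k
  rw [Matrix.mul_apply]
  simp only [Matrix.mul_diagonal, transpose_apply, E, diagonal_apply]
  by_cases hi : (i : ℕ) < d
  · rw [Finset.sum_eq_single (⟨(i : ℕ), hi⟩ : Fin d)]
    · by_cases hik : i = k
      · subst hik; simp [hi]
      · have hki : ¬((k : ℕ) = (i : ℕ)) := fun h => hik (Fin.ext h.symm)
        simp [hik, hki]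
    · intro j _ hj
      rw [if_neg, zero_mul, zero_mul]
      intro h
      exact hj (Fin.ext h.symm)
    · simp
  · rw [Finset.sum_eq_zero, eq_comm]
    · split <;> simp [hi]
    · intro j _
      rw [if_neg, zero_mul, zero_mul]
      intro h
      exact hi (h ▸ j.isLt)

lemma EEt {d n : ℕ} :
    E d n * (E d n)ᵀ
      = diagonal (fun i : Fin n => if (i : ℕ) < d then (1:ℝ) else 0) := by
  have h := EdE (d := d) (n := n) (fun _ => (1:ℝ))
  have h1 : diagonal (fun _ : Fin d => (1:ℝ)) = 1 := diagonal_one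
  rw [h1, Matrix.mul_one] at h
  rw [h]
  rfl

lemma conj_inv {n : ℕ} (Q : Matrix (Fin n) (Fin n) ℝ) (hQ : Qᵀ * Q = 1)
    (μ : Fin n → ℝ) (hμ : ∀ i, μ i ≠ 0) :
    (Qᵀ * diagonal μ * Q)⁻¹ = Qᵀ * diagonal (fun i => (μ i)⁻¹) * Q := by
  have hQ' : Q * Qᵀ = 1 := mul_eq_one_comm.mp hQ
  apply inv_eq_right_inv
  calc Qᵀ * diagonal μ * Q * (Qᵀ * diagonal (fun i => (μ i)⁻¹) * Q)
      = Qᵀ * diagonal μ * (Q * Qᵀ) * diagonal (fun i => (μ i)⁻¹) * Q := by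
        simp only [Matrix.mul_assoc]
    _ = Qᵀ * (diagonal μ * diagonal (fun i => (μ i)⁻¹)) * Q := by
        rw [hQ']; simp only [Matrix.mul_one, Matrix.mul_assoc]
    _ = 1 := by
        rw [diagonal_mul_diagonal]
        have : (fun i => μ i * (μ i)⁻¹) = fun _ : Fin n => (1:ℝ) := by
          funext i; exact mul_inv_cancel₀ (hμ i)
        rw [this, diagonal_one, Matrix.mul_one, hQ]

lemma extend {d n : ℕ} (hdn : d ≤ n) (W : Matrix (Fin n) (Fin d) ℝ)
    (hW : Wᵀ * W = 1) :
    ∃ Q : Matrix (Fin n) (Fin n) ℝ, Qᵀ * Q = 1 ∧ Qᵀ * E d n = W := by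
  classical
  set v : Fin n → EuclideanSpace ℝ (Fin n) :=
    fun i => if h : (i : ℕ) < d then WithLp.toLp 2 (fun r => W r ⟨i, h⟩) else 0 with hv
  have hcard : Module.finrank ℝ (EuclideanSpace ℝ (Fin n)) = Fintype.card (Fin n) := by
    simp
  have horth : Orthonormal ℝ (({i : Fin n | (i : ℕ) < d}).restrict v) := by
    rw [orthonormal_iff_ite]
    rintro ⟨i, hi⟩ ⟨j, hj⟩
    have hi' : (i : ℕ) < d := hi
    have hj' : (j : ℕ) < d := hj
    have hWij := congrFun (congrFun hW (⟨(i : ℕ), hi'⟩ : Fin d)) (⟨(j : ℕ), hj'⟩ : Fin d)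
    simp only [mul_apply, transpose_apply, one_apply] at hWij
    rw [PiLp.inner_apply]
    simp only [Set.restrict_apply, Set.restrict, Set.domRestrict_apply, hv, dif_pos hi', dif_pos hj', RCLike.inner_apply,
      starRingEnd_apply, star_trivial, WithLp.ofLp_toLp]
    rw [Finset.sum_congr rfl (fun x _ => mul_comm (W x _) (W x _)), hWij]
    simp [Fin.ext_iff, Subtype.ext_iff]
  obtain ⟨b, hb⟩ := horth.exists_orthonormalBasis_extension_of_card_eq hcard
  refine ⟨Matrix.of fun i j => b i j, ?_, ?_⟩
  · rw [mul_eq_one_comm]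
    ext i k
    have hbo := orthonormal_iff_ite.mp b.orthonormal i k
    rw [PiLp.inner_apply] at hbo
    simp only [RCLike.inner_apply, starRingEnd_apply, star_trivial] at hbo
    simpa [mul_apply, one_apply, Matrix.of_apply, mul_comm] using hbo
  · ext r j
    simp only [mul_apply, transpose_apply, E, Matrix.of_apply]
    rw [Finset.sum_eq_single (Fin.castLE hdn j)]
    · rw [if_pos (by simp), mul_one]
      have hmem : Fin.castLE hdn j ∈ {i : Fin n | (i : ℕ) < d} := by simp [j.isLt]
      rw [hb _ hmem]
      simp only [hv]
      rw [dif_pos]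
      · rfl
      · exact j.isLt
    · intro i _ hi
      rw [if_neg, mul_zero]
      intro h
      exact hi (by simpa [Fin.ext_iff] using h)
    · simp

lemma master {d n : ℕ} (hdn : d ≤ n) (σ : ℝ) (hσ : 0 < σ)
    (Q : Matrix (Fin n) (Fin n) ℝ) (hQ : Qᵀ * Q = 1)
    (lam : Fin d → ℝ) (hlam : ∀ i, 0 < lam i) :
    ((σ ^ 2)⁻¹ • ((1 : Matrix (Fin n) (Fin n) ℝ) - (Qᵀ * E d n) * (Qᵀ * E d n)ᵀ)
        + (Qᵀ * E d n) * (diagonal lam)⁻¹ * (Qᵀ * E d n)ᵀ)⁻¹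
      = Qᵀ * diagonal
          (fun i : Fin n => if h : (i : ℕ) < d then lam ⟨i, h⟩ else σ ^ 2) * Q := by
  have hσ2 : (0:ℝ) < σ ^ 2 := by positivity
  have hSinv : (diagonal lam)⁻¹ = diagonal (fun i => (lam i)⁻¹) := by
    apply inv_eq_right_inv
    rw [diagonal_mul_diagonal]
    have : (fun i => lam i * (lam i)⁻¹) = fun _ : Fin d => (1:ℝ) := by
      funext i; exact mul_inv_cancel₀ (hlam i).ne'
    rw [this, diagonal_one]
  set μ : Fin n → ℝ :=
    fun i => if h : (i : ℕ) < d then (lam ⟨i, h⟩)⁻¹ else (σ ^ 2)⁻¹ with hμdef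
  have hne : ∀ i, μ i ≠ 0 := by
    intro i
    simp only [hμdef]
    split
    · exact inv_ne_zero (hlam _).ne'
    · exact inv_ne_zero hσ2.ne'
  have hB : (σ ^ 2)⁻¹ • ((1 : Matrix (Fin n) (Fin n) ℝ) - E d n * (E d n)ᵀ)
        + E d n * diagonal (fun i => (lam i)⁻¹) * (E d n)ᵀ = diagonal μ := by
    rw [EEt, EdE]
    ext i k
    simp only [Matrix.smul_apply, Matrix.sub_apply, one_apply, diagonal_apply, Matrix.add_apply, smul_eq_mul, hμdef]
    by_cases hik : i = k
    · subst hik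
      simp only [if_pos rfl]
      by_cases h : (i : ℕ) < d <;> simp [h]
    · simp [hik]
  have hkey : (σ ^ 2)⁻¹ • ((1 : Matrix (Fin n) (Fin n) ℝ) - (Qᵀ * E d n) * (Qᵀ * E d n)ᵀ)
        + (Qᵀ * E d n) * (diagonal lam)⁻¹ * (Qᵀ * E d n)ᵀ
      = Qᵀ * diagonal μ * Q := by
    rw [hSinv, transpose_mul, transpose_transpose, ← hB, Matrix.mul_add, Matrix.add_mul,
      Matrix.mul_smul, Matrix.smul_mul, Matrix.mul_sub, Matrix.sub_mul, Matrix.mul_one, hQ]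
    simp only [Matrix.mul_assoc]
  rw [hkey, conj_inv Q hQ μ hne]
  have hfun : (fun i => (μ i)⁻¹)
      = (fun i : Fin n => if h : (i : ℕ) < d then lam ⟨i, h⟩ else σ ^ 2) := by
    funext i
    simp only [hμdef]
    by_cases h : (i : ℕ) < d <;> simp [h]
  rw [hfun]

end Stmt6Aux

open Stmt6Aux

theorem stmt_6 (d n : ℕ) (hd : 0 < d) (hn : 0 < n) (hdn : d ≤ n)
    (σ : ℝ) (hσ : 0 < σ) :
    {M : Matrix (Fin n) (Fin n) ℝ |
        ∃ (U : Matrix (Fin n) (Fin d) ℝ) (S : Matrix (Fin d) (Fin d) ℝ),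
          Uᵀ * U = 1 ∧ S.PosDef ∧
          M = ((σ ^ 2)⁻¹ • ((1 : Matrix (Fin n) (Fin n) ℝ) - U * Uᵀ) + U * S⁻¹ * Uᵀ)⁻¹} =
      {M : Matrix (Fin n) (Fin n) ℝ |
        ∃ (Q : Matrix (Fin n) (Fin n) ℝ) (lam : Fin d → ℝ),
          Qᵀ * Q = 1 ∧ (∀ i, 0 < lam i) ∧
          M = Qᵀ * Matrix.diagonal
                (fun i : Fin n => if h : (i : ℕ) < d then lam ⟨i, h⟩ else σ ^ 2) * Q} := by
  ext M
  simp only [Set.mem_setOf_eq]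
  constructor
  · rintro ⟨U, S, hU, hS, rfl⟩
    have hH : S.IsHermitian := hS.1
    set V : Matrix (Fin d) (Fin d) ℝ := (hH.eigenvectorUnitary : Matrix (Fin d) (Fin d) ℝ)
      with hVdef
    have hVmem := hH.eigenvectorUnitary.2
    have hVstar : star V = Vᵀ := by
      rw [Matrix.star_eq_conjTranspose, conjTranspose_eq_transpose_of_trivial]
    have hVV : Vᵀ * V = 1 := by
      rw [← hVstar]
      exact Unitary.star_mul_self_of_mem hVmem
    have hVV' : V * Vᵀ = 1 := mul_eq_one_comm.mp hVV
    set ev : Fin d → ℝ := hH.eigenvalues with hevdef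
    have hspec : S = V * diagonal ev * Vᵀ := by
      have h := hH.spectral_theorem
      rw [Unitary.conjStarAlgAut_apply, ← hVdef, hVstar] at h
      simpa [RCLike.ofReal_real_eq_id] using h
    have hevpos : ∀ i, 0 < ev i := fun i => hS.eigenvalues_pos i
    have hSinv : S⁻¹ = V * diagonal (fun i => (ev i)⁻¹) * Vᵀ := by
      apply inv_eq_right_inv
      rw [hspec]
      calc V * diagonal ev * Vᵀ * (V * diagonal (fun i => (ev i)⁻¹) * Vᵀ)
          = V * diagonal ev * (Vᵀ * V) * diagonal (fun i => (ev i)⁻¹) * Vᵀ := by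
            simp only [Matrix.mul_assoc]
        _ = V * (diagonal ev * diagonal (fun i => (ev i)⁻¹)) * Vᵀ := by
            rw [hVV]; simp only [Matrix.mul_one, Matrix.mul_assoc]
        _ = 1 := by
            rw [diagonal_mul_diagonal]
            have : (fun i => ev i * (ev i)⁻¹) = fun _ : Fin d => (1:ℝ) := by
              funext i; exact mul_inv_cancel₀ (hevpos i).ne'
            rw [this, diagonal_one, Matrix.mul_one, hVV']
    set W : Matrix (Fin n) (Fin d) ℝ := U * V with hWdef
    have hWW : Wᵀ * W = 1 := by
      rw [hWdef, transpose_mul, Matrix.mul_assoc, ← Matrix.mul_assoc Uᵀ, hU,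
        Matrix.one_mul, hVV]
    obtain ⟨Q, hQ, hQE⟩ := extend hdn W hWW
    refine ⟨Q, ev, hQ, hevpos, ?_⟩
    have hUUt : U * Uᵀ = W * Wᵀ := by
      rw [hWdef, transpose_mul, Matrix.mul_assoc, ← Matrix.mul_assoc V, hVV',
        Matrix.one_mul]
    have hdinv : (diagonal ev)⁻¹ = diagonal (fun i => (ev i)⁻¹) := by
      apply inv_eq_right_inv
      rw [diagonal_mul_diagonal]
      have : (fun i => ev i * (ev i)⁻¹) = fun _ : Fin d => (1:ℝ) := by
        funext i; exact mul_inv_cancel₀ (hevpos i).ne'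
      rw [this, diagonal_one]
    have hUSU : U * S⁻¹ * Uᵀ = W * (diagonal ev)⁻¹ * Wᵀ := by
      rw [hSinv, hdinv, hWdef, transpose_mul]
      simp only [Matrix.mul_assoc]
    rw [hUUt, hUSU, ← hQE]
    exact master hdn σ hσ Q hQ ev hevpos
  · rintro ⟨Q, lam, hQ, hlam, rfl⟩
    refine ⟨Qᵀ * E d n, diagonal lam, ?_, posDef_diagonal_iff.mpr hlam, ?_⟩
    · rw [transpose_mul, transpose_transpose, Matrix.mul_assoc, ← Matrix.mul_assoc Q,
        mul_eq_one_comm.mp hQ, Matrix.one_mul, EtE hdn]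
    · rw [master hdn σ hσ Q hQ lam hlam]
end

section
/- Let d ≤ n be positive integers, σ > 0, x₁,…,x_N ∈ ℝ^n, β₁,…,β_N > 0 with α := Σᵢβᵢ, m := Σᵢβᵢxᵢ, C := Σᵢβᵢxᵢxᵢᵀ, and for b ∈ ℝ^n set v(b) := m − αb and S(b) := C − mbᵀ − bmᵀ + αbbᵀ. Assume S(b) is positive definite for every b ∈ ℝ^n. Then the function G(U,b) := −(1/σ²)(trace(UᵀS(b)U) − ‖v(b)‖²/α) − v(b)ᵀU(UᵀS(b)U)⁻¹Uᵀv(b) + α log det(UᵀS(b)U) attains a global minimum on St(d,n) × ℝ^n; that is, there exists (Û, b̂) ∈ St(d,n) × ℝ^n with G(Û, b̂) ≤ G(U, b) for all U ∈ St(d,n) and b ∈ ℝ^n. -/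
set_option maxHeartbeats 1000000


open Matrix

/-- `m = Σᵢ βᵢ xᵢ`. -/
noncomputable def mVec {n N : ℕ} (x : Fin N → Fin n → ℝ) (β : Fin N → ℝ) : Fin n → ℝ :=
  ∑ i, β i • x i

/-- `v(b) = m − α b`. -/
noncomputable def vVec {n N : ℕ} (x : Fin N → Fin n → ℝ) (β : Fin N → ℝ) (b : Fin n → ℝ) :
    Fin n → ℝ :=
  mVec x β - (∑ i, β i) • b

/-- `S(b) = C − m bᵀ − b mᵀ + α b bᵀ`. -/
noncomputable def sMat {n N : ℕ} (x : Fin N → Fin n → ℝ) (β : Fin N → ℝ) (b : Fin n → ℝ) :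
    Matrix (Fin n) (Fin n) ℝ :=
  (∑ i, β i • Matrix.vecMulVec (x i) (x i)) - Matrix.vecMulVec (mVec x β) b
    - Matrix.vecMulVec b (mVec x β) + (∑ i, β i) • Matrix.vecMulVec b b

/-- The function `G(U, b)` from the M-step of the PCA-GMM EM algorithm. -/
noncomputable def gFun {d n N : ℕ} (σ : ℝ) (x : Fin N → Fin n → ℝ) (β : Fin N → ℝ)
    (U : Matrix (Fin n) (Fin d) ℝ) (b : Fin n → ℝ) : ℝ :=
  -(σ ^ 2)⁻¹ * ((Uᵀ * sMat x β b * U).trace - (vVec x β b ⬝ᵥ vVec x β b) / (∑ i, β i))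
    - vVec x β b ⬝ᵥ ((U * (Uᵀ * sMat x β b * U)⁻¹ * Uᵀ) *ᵥ vVec x β b)
    + (∑ i, β i) * Real.log (Uᵀ * sMat x β b * U).det

namespace Stmt15Aux

noncomputable def q {k : ℕ} (A : Matrix (Fin k) (Fin k) ℝ) (z : Fin k → ℝ) : ℝ := z ⬝ᵥ (A *ᵥ z)

noncomputable def ns {k : ℕ} (z : Fin k → ℝ) : ℝ := z ⬝ᵥ z

lemma ns_nonneg {k : ℕ} (z : Fin k → ℝ) : 0 ≤ ns z := by
  simp only [ns, dotProduct]
  exact Finset.sum_nonneg fun i _ => mul_self_nonneg (z i)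

lemma ns_pos {k : ℕ} {z : Fin k → ℝ} (hz : z ≠ 0) : 0 < ns z := by
  rcases lt_or_eq_of_le (ns_nonneg z) with h | h
  · exact h
  · exact absurd (dotProduct_self_eq_zero.mp h.symm) hz

lemma cross_symm {k : ℕ} {A : Matrix (Fin k) (Fin k) ℝ} (hA : Aᵀ = A) (y z : Fin k → ℝ) :
    y ⬝ᵥ (A *ᵥ z) = z ⬝ᵥ (A *ᵥ y) := by
  rw [dotProduct_mulVec, ← mulVec_transpose, hA, dotProduct_comm]

lemma quad_CS {k : ℕ} {A : Matrix (Fin k) (Fin k) ℝ} (hA : Aᵀ = A)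
    (hpsd : ∀ z, 0 ≤ q A z) (y z : Fin k → ℝ) :
    (y ⬝ᵥ (A *ᵥ z)) ^ 2 ≤ q A y * q A z := by
  have key : ∀ t : ℝ, 0 ≤ q A y * (t * t) + (2 * (y ⬝ᵥ (A *ᵥ z))) * t + q A z := by
    intro t
    have h0 := hpsd (t • y + z)
    have expand : q A (t • y + z)
        = q A y * (t * t) + (2 * (y ⬝ᵥ (A *ᵥ z))) * t + q A z := by
      simp only [q, mulVec_add, mulVec_smul, dotProduct_add, add_dotProduct,
        smul_dotProduct, dotProduct_smul, smul_eq_mul]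
      rw [cross_symm hA z y]
      ring
    linarith [expand ▸ h0]
  have hd := discrim_le_zero key
  simp only [discrim] at hd
  nlinarith [hd]

lemma psd_q_nonneg {k : ℕ} {A : Matrix (Fin k) (Fin k) ℝ} (hA : A.PosSemidef) (z : Fin k → ℝ) :
    0 ≤ q A z := by
  have := (posSemidef_iff_dotProduct_mulVec.mp hA).2 z
  rwa [star_trivial] at this

lemma posdef_transpose_eq {k : ℕ} {A : Matrix (Fin k) (Fin k) ℝ} (hA : A.PosDef) : Aᵀ = A := by
  have := hA.1
  rwa [Matrix.IsHermitian, conjTranspose_eq_transpose_of_trivial] at this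

lemma continuous_ns {k : ℕ} : Continuous (ns (k := k)) :=
  continuous_id.dotProduct continuous_id

lemma continuous_q {k : ℕ} (A : Matrix (Fin k) (Fin k) ℝ) : Continuous (q A) :=
  continuous_id.dotProduct (continuous_const.matrix_mulVec continuous_id)

lemma isCompact_sphere' {k : ℕ} : IsCompact {z : Fin k → ℝ | ns z = 1} := by
  refine IsCompact.of_isClosed_subset
    (isCompact_univ_pi fun _ => isCompact_Icc (a := (-1:ℝ)) (b := 1))
    (isClosed_eq continuous_ns continuous_const) ?_
  intro z hz
  simp only [Set.mem_setOf_eq] at hz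
  intro i _
  have h1 : z i * z i ≤ 1 := by
    rw [← hz]
    simp only [ns, dotProduct]
    exact Finset.single_le_sum (fun j _ => mul_self_nonneg (z j)) (Finset.mem_univ i)
  constructor <;> nlinarith

lemma ns_smul {k : ℕ} (r : ℝ) (z : Fin k → ℝ) : ns (r • z) = r ^ 2 * ns z := by
  simp only [ns, smul_dotProduct, dotProduct_smul, smul_eq_mul]; ring

lemma q_smul {k : ℕ} (A : Matrix (Fin k) (Fin k) ℝ) (r : ℝ) (z : Fin k → ℝ) :
    q A (r • z) = r ^ 2 * q A z := by
  simp only [q, mulVec_smul, smul_dotProduct, dotProduct_smul, smul_eq_mul]; ring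

lemma normalize {k : ℕ} {z : Fin k → ℝ} (hz : z ≠ 0) :
    ∃ (e : Fin k → ℝ) (r : ℝ), 0 < r ∧ ns e = 1 ∧ z = r • e := by
  have hns : 0 < ns z := ns_pos hz
  refine ⟨(Real.sqrt (ns z))⁻¹ • z, Real.sqrt (ns z), Real.sqrt_pos.mpr hns, ?_, ?_⟩
  · rw [ns_smul, inv_pow, Real.sq_sqrt hns.le]
    field_simp
  · rw [smul_smul, mul_inv_cancel₀ (Real.sqrt_pos.mpr hns).ne', one_smul]

lemma exists_lower_bound {k : ℕ} (hk : 0 < k) {A : Matrix (Fin k) (Fin k) ℝ}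
    (hA : A.PosDef) : ∃ lam : ℝ, 0 < lam ∧ ∀ z, lam * ns z ≤ q A z := by
  have hne : {z : Fin k → ℝ | ns z = 1}.Nonempty := by
    refine ⟨Pi.single ⟨0, hk⟩ 1, ?_⟩
    simp [ns, dotProduct_single]
  obtain ⟨e₀, he₀, hmin⟩ := isCompact_sphere'.exists_isMinOn hne (continuous_q A).continuousOn
  have he₀ne : e₀ ≠ 0 := by
    intro h
    rw [Set.mem_setOf_eq, h] at he₀
    simp [ns] at he₀
  have hlam : 0 < q A e₀ := by
    have := (posDef_iff_dotProduct_mulVec.mp hA).2 he₀ne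
    simpa [q, star_trivial] using this
  refine ⟨q A e₀, hlam, fun z => ?_⟩
  by_cases hz : z = 0
  · simp [hz, ns, q]
  · obtain ⟨e, r, hr, he, rfl⟩ := normalize hz
    rw [ns_smul, q_smul, he, mul_one]
    have := isMinOn_iff.mp hmin e he
    nlinarith

lemma exists_upper_bound {k : ℕ} {A : Matrix (Fin k) (Fin k) ℝ} :
    ∃ L : ℝ, 0 < L ∧ ∀ z, q A z ≤ L * ns z := by
  rcases Set.eq_empty_or_nonempty {z : Fin k → ℝ | ns z = 1} with hemp | hne
  · refine ⟨1, one_pos, fun z => ?_⟩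
    by_cases hz : z = 0
    · simp [hz, ns, q]
    · obtain ⟨e, r, hr, he, rfl⟩ := normalize hz
      exfalso
      have hmem : e ∈ {z : Fin k → ℝ | ns z = 1} := he
      rw [hemp] at hmem
      exact Set.notMem_empty e hmem
  · obtain ⟨e₀, he₀, hmax⟩ := isCompact_sphere'.exists_isMaxOn hne (continuous_q A).continuousOn
    refine ⟨max (q A e₀) 1, lt_of_lt_of_le one_pos (le_max_right _ _), fun z => ?_⟩
    by_cases hz : z = 0
    · simp [hz, ns, q]
    · obtain ⟨e, r, hr, he, rfl⟩ := normalize hz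
      rw [ns_smul, q_smul, he, mul_one]
      have h1 := isMaxOn_iff.mp hmax e he
      have h2 : q A e₀ ≤ max (q A e₀) 1 := le_max_left _ _
      nlinarith

lemma conj_vecMulVec {n d : ℕ} (U : Matrix (Fin n) (Fin d) ℝ) (w : Fin n → ℝ) :
    Uᵀ * vecMulVec w w * U = vecMulVec (Uᵀ *ᵥ w) (Uᵀ *ᵥ w) := by
  rw [vecMulVec_eq (Fin 1), vecMulVec_eq (Fin 1)]
  rw [replicateCol_mulVec, mulVec_transpose, replicateRow_vecMul]
  rw [Matrix.mul_assoc, Matrix.mul_assoc, Matrix.mul_assoc]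

lemma q_conj {n d : ℕ} (U : Matrix (Fin n) (Fin d) ℝ) (S : Matrix (Fin n) (Fin n) ℝ)
    (z : Fin d → ℝ) : q (Uᵀ * S * U) z = q S (U *ᵥ z) := by
  simp only [q]
  rw [← mulVec_mulVec, ← mulVec_mulVec, dotProduct_mulVec, ← mulVec_transpose,
    transpose_transpose]

lemma mulVec_ne_zero {n d : ℕ} {U : Matrix (Fin n) (Fin d) ℝ} (hU : Uᵀ * U = 1)
    {z : Fin d → ℝ} (hz : z ≠ 0) : U *ᵥ z ≠ 0 := by
  intro h
  apply hz
  have : Uᵀ *ᵥ (U *ᵥ z) = z := by rw [mulVec_mulVec, hU, one_mulVec]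
  rw [h, mulVec_zero] at this
  exact this.symm

lemma posdef_conj {n d : ℕ} {S : Matrix (Fin n) (Fin n) ℝ} (hS : S.PosDef)
    {U : Matrix (Fin n) (Fin d) ℝ} (hU : Uᵀ * U = 1) : (Uᵀ * S * U).PosDef := by
  rw [posDef_iff_dotProduct_mulVec]
  constructor
  · have h1 : Sᵀ = S := posdef_transpose_eq hS
    show (Uᵀ * S * U)ᴴ = Uᵀ * S * U
    rw [conjTranspose_eq_transpose_of_trivial]
    rw [transpose_mul, transpose_mul, transpose_transpose, h1, Matrix.mul_assoc]
  · intro z hz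
    have hq := q_conj U S z
    simp only [q] at hq
    have := (posDef_iff_dotProduct_mulVec.mp hS).2 (mulVec_ne_zero hU hz)
    rw [star_trivial] at this ⊢
    rw [hq]
    exact this

lemma ns_mulVec {n d : ℕ} {U : Matrix (Fin n) (Fin d) ℝ} (hU : Uᵀ * U = 1)
    (z : Fin d → ℝ) : ns (U *ᵥ z) = ns z := by
  simp only [ns]
  rw [dotProduct_mulVec, ← mulVec_transpose, mulVec_mulVec, hU, one_mulVec]

lemma ns_transpose_mulVec_le {n d : ℕ} {U : Matrix (Fin n) (Fin d) ℝ} (hU : Uᵀ * U = 1)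
    (w : Fin n → ℝ) : ns (Uᵀ *ᵥ w) ≤ ns w := by
  set u := Uᵀ *ᵥ w with hu
  have h1 : (U *ᵥ u) ⬝ᵥ (U *ᵥ u) = u ⬝ᵥ u := ns_mulVec hU u
  have h2 : w ⬝ᵥ (U *ᵥ u) = u ⬝ᵥ u := by
    rw [dotProduct_mulVec, ← mulVec_transpose, hu]
  have h3 : (U *ᵥ u) ⬝ᵥ w = u ⬝ᵥ u := by
    rw [dotProduct_comm]; exact h2
  have h4 : 0 ≤ (w - U *ᵥ u) ⬝ᵥ (w - U *ᵥ u) := by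
    simp only [dotProduct]
    exact Finset.sum_nonneg fun i _ => mul_self_nonneg _
  simp only [ns]
  simp only [sub_dotProduct, dotProduct_sub] at h4
  linarith

lemma q_inv_lower {k : ℕ} {A : Matrix (Fin k) (Fin k) ℝ} (hA : A.PosDef) {L : ℝ} (hL : 0 < L)
    (hub : ∀ z, q A z ≤ L * ns z) (z : Fin k → ℝ) : ns z / L ≤ q A⁻¹ z := by
  by_cases hz : z = 0
  · simp [hz, ns, q]
  · have hdet : IsUnit A.det := hA.det_pos.ne'.isUnit
    set y := A⁻¹ *ᵥ z with hy
    have hAy : A *ᵥ y = z := by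
      rw [hy, mulVec_mulVec, mul_nonsing_inv _ hdet, one_mulVec]
    have hns : 0 < ns z := ns_pos hz
    have hcs := quad_CS (posdef_transpose_eq hA) (psd_q_nonneg hA.posSemidef) z y
    have h1 : z ⬝ᵥ (A *ᵥ y) = ns z := by rw [hAy]; rfl
    have h2 : q A y = q A⁻¹ z := by
      simp only [q, ← hy]
      rw [← hAy]
      exact (dotProduct_comm _ _).symm
    rw [h1, h2] at hcs
    have h3 := hub z
    have h4 : 0 ≤ q A⁻¹ z := by
      rw [← h2]; exact psd_q_nonneg hA.posSemidef y
    have h5 : ns z ^ 2 ≤ L * ns z * q A⁻¹ z := by nlinarith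
    rw [div_le_iff₀ hL]
    nlinarith

lemma middle_bound {k : ℕ} {M : Matrix (Fin k) (Fin k) ℝ} (hM : M.PosDef) {u : Fin k → ℝ}
    {a : ℝ} (ha : 0 < a) (hq : ∀ y, (u ⬝ᵥ y) ^ 2 ≤ a * q M y) :
    0 ≤ u ⬝ᵥ (M⁻¹ *ᵥ u) ∧ u ⬝ᵥ (M⁻¹ *ᵥ u) ≤ a := by
  have hdet : IsUnit M.det := hM.det_pos.ne'.isUnit
  set y := M⁻¹ *ᵥ u with hy
  have hMy : M *ᵥ y = u := by
    rw [hy, mulVec_mulVec, mul_nonsing_inv _ hdet, one_mulVec]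
  have ht : u ⬝ᵥ y = q M y := by
    rw [← hMy, dotProduct_comm]; rfl
  have h0 : 0 ≤ q M y := psd_q_nonneg hM.posSemidef y
  have h1 := hq y
  constructor
  · rw [ht]; exact h0
  · rw [ht] at h1 ⊢
    nlinarith

lemma det_rank_one_update {k : ℕ} {A : Matrix (Fin k) (Fin k) ℝ} (hA : IsUnit A.det)
    (a : ℝ) (u : Fin k → ℝ) :
    (A + a • vecMulVec u u).det = A.det * (1 + a * (u ⬝ᵥ (A⁻¹ *ᵥ u))) := by
  have h1 : a • vecMulVec u u = replicateCol (Fin 1) (a • u) * replicateRow (Fin 1) u := by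
    rw [vecMulVec_eq (Fin 1), replicateCol_smul, Matrix.smul_mul]
    rfl
  have hMul : A * A⁻¹ = 1 := mul_nonsing_inv _ hA
  have h2 : A + a • vecMulVec u u
      = A * (1 + replicateCol (Fin 1) (A⁻¹ *ᵥ (a • u)) * replicateRow (Fin 1) u) := by
    rw [replicateCol_mulVec, Matrix.mul_add, Matrix.mul_one, ← Matrix.mul_assoc, ← Matrix.mul_assoc,
      hMul, Matrix.one_mul, h1]
  rw [h2, det_mul]
  erw [det_one_add_replicateCol_mul_replicateRow]
  rw [mulVec_smul, dotProduct_smul]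
  rfl

lemma vecMulVec_mulVec' {k : ℕ} (u y : Fin k → ℝ) :
    vecMulVec u u *ᵥ y = (u ⬝ᵥ y) • u := by
  funext i
  simp only [vecMulVec_apply, mulVec, dotProduct, Pi.smul_apply, smul_eq_mul,
    Finset.sum_mul, Finset.mul_sum]
  exact Finset.sum_congr rfl fun j _ => by ring

lemma sMat_decomp {n N : ℕ} (x : Fin N → Fin n → ℝ) (β : Fin N → ℝ)
    (hA : (∑ i, β i) ≠ 0) (b : Fin n → ℝ) :
    sMat x β b = sMat x β ((∑ i, β i)⁻¹ • mVec x β)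
      + (∑ i, β i) • vecMulVec (b - (∑ i, β i)⁻¹ • mVec x β)
          (b - (∑ i, β i)⁻¹ • mVec x β) := by
  ext i j
  simp only [sMat, Matrix.add_apply, Matrix.sub_apply, Matrix.smul_apply, vecMulVec_apply,
    Pi.sub_apply, Pi.smul_apply, smul_eq_mul]
  field_simp
  ring

lemma vVec_decomp {n N : ℕ} (x : Fin N → Fin n → ℝ) (β : Fin N → ℝ)
    (hA : (∑ i, β i) ≠ 0) (b : Fin n → ℝ) :
    vVec x β b = (-(∑ i, β i)) • (b - (∑ i, β i)⁻¹ • mVec x β) := by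
  ext i
  simp only [vVec, Pi.sub_apply, Pi.smul_apply, smul_eq_mul, Pi.neg_apply]
  field_simp
  ring

lemma continuous_sMat {n N : ℕ} (x : Fin N → Fin n → ℝ) (β : Fin N → ℝ) :
    Continuous fun b : Fin n → ℝ => sMat x β b := by
  apply continuous_matrix
  intro i j
  simp only [sMat, Matrix.add_apply, Matrix.sub_apply, Matrix.smul_apply, vecMulVec_apply,
    smul_eq_mul]
  fun_prop

lemma continuous_vVec {n N : ℕ} (x : Fin N → Fin n → ℝ) (β : Fin N → ℝ) :
    Continuous fun b : Fin n → ℝ => vVec x β b := by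
  apply continuous_pi
  intro i
  simp only [vVec, Pi.sub_apply, Pi.smul_apply, smul_eq_mul]
  fun_prop


lemma gFun_lower_bound {d n N : ℕ} (σ : ℝ) (x : Fin N → Fin n → ℝ) (β : Fin N → ℝ)
    (hσ : σ ≠ 0) (hApos : 0 < ∑ i, β i)
    (hSpd : ∀ b, (sMat x β b).PosDef)
    {L c₀ : ℝ} (hL : 0 < L) (hc₀ : 0 < c₀)
    (hub : ∀ z, q (sMat x β ((∑ i, β i)⁻¹ • mVec x β)) z ≤ L * ns z)
    (hdetlow : ∀ U : Matrix (Fin n) (Fin d) ℝ, Uᵀ * U = 1 →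
      c₀ ≤ (Uᵀ * sMat x β ((∑ i, β i)⁻¹ • mVec x β) * U).det)
    (U : Matrix (Fin n) (Fin d) ℝ) (b : Fin n → ℝ) (hU : Uᵀ * U = 1) :
    -(σ ^ 2)⁻¹ * (L * d) - (∑ i, β i) + (∑ i, β i) * Real.log c₀
      + (σ ^ 2)⁻¹ * (∑ i, β i) *
          (ns (b - (∑ i, β i)⁻¹ • mVec x β) - ns (Uᵀ *ᵥ (b - (∑ i, β i)⁻¹ • mVec x β)))
      + (∑ i, β i) *
          Real.log (1 + (∑ i, β i) * ns (Uᵀ *ᵥ (b - (∑ i, β i)⁻¹ • mVec x β)) / L)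
    ≤ gFun σ x β U b := by
  simp only [gFun]
  set A := ∑ i, β i with hAdef
  set c : Fin n → ℝ := A⁻¹ • mVec x β with hcdef
  set w : Fin n → ℝ := b - c with hwdef
  set u : Fin d → ℝ := Uᵀ *ᵥ w with hudef
  set Sm := sMat x β c with hSmdef
  set AU := Uᵀ * Sm * U with hAUdef
  have hSmpd : Sm.PosDef := hSpd c
  have hAUpd : AU.PosDef := posdef_conj hSmpd hU
  have hσ2 : (0:ℝ) < (σ ^ 2)⁻¹ := by positivity
  have hMpd : (Uᵀ * sMat x β b * U).PosDef := posdef_conj (hSpd b) hU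
  have hdetAU : IsUnit AU.det := hAUpd.det_pos.ne'.isUnit
  have hMdec : Uᵀ * sMat x β b * U = AU + A • vecMulVec u u := by
    rw [sMat_decomp x β (ne_of_gt hApos) b]
    rw [Matrix.mul_add, Matrix.add_mul, Matrix.mul_smul, Matrix.smul_mul, conj_vecMulVec]
  have hubAU : ∀ z, q AU z ≤ L * ns z := by
    intro z
    rw [hAUdef, hSmdef, q_conj, ← ns_mulVec hU z]
    exact hub _
  have htrace : (Uᵀ * sMat x β b * U).trace = AU.trace + A * ns u := by
    rw [hMdec, trace_add, trace_smul, smul_eq_mul]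
    have hvv : (vecMulVec u u).trace = ns u := by
      rw [vecMulVec_eq (Fin 1), trace_replicateCol_mul_replicateRow]
      rfl
    rw [hvv]
  have htrAU : AU.trace ≤ L * d := by
    have h1 : ∀ j : Fin d, AU j j ≤ L := by
      intro j
      have h2 : AU j j = q AU (Pi.single j 1) := by
        simp [q, mulVec_single, single_dotProduct]
      have h3 : ns (Pi.single j 1 : Fin d → ℝ) = 1 := by
        simp [ns, dotProduct_single]
      have h4 := hubAU (Pi.single j 1)
      rw [h3, mul_one] at h4
      rw [h2]
      exact h4
    calc AU.trace = ∑ j, AU j j := by simp [Matrix.trace, Matrix.diag]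
    _ ≤ ∑ _j : Fin d, L := Finset.sum_le_sum fun j _ => h1 j
    _ = L * d := by simp [Finset.sum_const, Finset.card_univ, mul_comm]
  have hvdec : vVec x β b = (-A) • w := vVec_decomp x β (ne_of_gt hApos) b
  have hnsv : vVec x β b ⬝ᵥ vVec x β b = A ^ 2 * ns w := by
    rw [hvdec]
    have h := ns_smul (-A) w
    simp only [ns] at h
    rw [h, neg_sq]
    rfl
  have hsr : ns u ≤ ns w := ns_transpose_mulVec_le hU w
  have hs0 : 0 ≤ ns u := ns_nonneg u
  have hr0 : 0 ≤ ns w := ns_nonneg w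
  have hqinvlow : ns u / L ≤ u ⬝ᵥ (AU⁻¹ *ᵥ u) := by
    have := q_inv_lower hAUpd hL hubAU u
    simpa [q] using this
  have hdetM : (Uᵀ * sMat x β b * U).det = AU.det * (1 + A * (u ⬝ᵥ (AU⁻¹ *ᵥ u))) := by
    rw [hMdec, det_rank_one_update hdetAU]
  have hquM : ∀ y, ((Uᵀ *ᵥ vVec x β b) ⬝ᵥ y) ^ 2 ≤ A * q (Uᵀ * sMat x β b * U) y := by
    intro y
    have h1 : Uᵀ *ᵥ vVec x β b = (-A) • u := by
      rw [hvdec, mulVec_smul]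
    have h2 : q (Uᵀ * sMat x β b * U) y = q AU y + A * (u ⬝ᵥ y) ^ 2 := by
      rw [hMdec]
      simp only [q, add_mulVec, smul_mulVec, vecMulVec_mulVec', dotProduct_add,
        dotProduct_smul, smul_eq_mul]
      rw [dotProduct_comm y u]
      ring
    have h3 : ((-A) • u) ⬝ᵥ y = -A * (u ⬝ᵥ y) := by
      rw [smul_dotProduct]; simp
    rw [h1, h3, h2]
    have h4 : 0 ≤ q AU y := psd_q_nonneg hAUpd.posSemidef y
    nlinarith [sq_nonneg (u ⬝ᵥ y)]
  obtain ⟨hmid0, hmidA⟩ := middle_bound hMpd hApos hquM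
  have hmid : vVec x β b ⬝ᵥ ((U * (Uᵀ * sMat x β b * U)⁻¹ * Uᵀ) *ᵥ vVec x β b)
      = (Uᵀ *ᵥ vVec x β b) ⬝ᵥ ((Uᵀ * sMat x β b * U)⁻¹ *ᵥ (Uᵀ *ᵥ vVec x β b)) := by
    rw [← mulVec_mulVec, ← mulVec_mulVec, dotProduct_mulVec (vVec x β b), ← mulVec_transpose]
  have hqinv0 : 0 ≤ u ⬝ᵥ (AU⁻¹ *ᵥ u) := le_trans (div_nonneg hs0 hL.le) hqinvlow
  have harg1 : (0:ℝ) < 1 + A * (u ⬝ᵥ (AU⁻¹ *ᵥ u)) := by nlinarith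
  have harg2 : (0:ℝ) < 1 + A * ns u / L := by
    have : 0 ≤ A * ns u / L := by positivity
    linarith
  have hlogdet : Real.log ((Uᵀ * sMat x β b * U).det)
      = Real.log AU.det + Real.log (1 + A * (u ⬝ᵥ (AU⁻¹ *ᵥ u))) := by
    rw [hdetM, Real.log_mul (ne_of_gt hAUpd.det_pos) (ne_of_gt harg1)]
  have hlog1 : Real.log c₀ ≤ Real.log AU.det := Real.log_le_log hc₀ (hdetlow U hU)
  have hlog2 : Real.log (1 + A * ns u / L) ≤ Real.log (1 + A * (u ⬝ᵥ (AU⁻¹ *ᵥ u))) := by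
    apply Real.log_le_log harg2
    have h5 : A * (ns u / L) ≤ A * (u ⬝ᵥ (AU⁻¹ *ᵥ u)) :=
      mul_le_mul_of_nonneg_left hqinvlow hApos.le
    have h6 : A * ns u / L = A * (ns u / L) := by ring
    linarith
  have hdiv : A ^ 2 * ns w / A = A * ns w := by
    field_simp
  rw [htrace, hnsv, hmid, hlogdet, hdiv]
  have hT1 : (σ ^ 2)⁻¹ * AU.trace ≤ (σ ^ 2)⁻¹ * (L * d) :=
    mul_le_mul_of_nonneg_left htrAU hσ2.le
  have hT3 : A * (Real.log c₀ + Real.log (1 + A * ns u / L))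
      ≤ A * (Real.log AU.det + Real.log (1 + A * (u ⬝ᵥ (AU⁻¹ *ᵥ u)))) :=
    mul_le_mul_of_nonneg_left (add_le_add hlog1 hlog2) hApos.le
  nlinarith [hT1, hT3, hmidA]

lemma contOn_matrix_mul {X : Type*} [TopologicalSpace X] {l m k : ℕ} {s : Set X}
    {A : X → Matrix (Fin l) (Fin m) ℝ} {B : X → Matrix (Fin m) (Fin k) ℝ}
    (hA : ContinuousOn A s) (hB : ContinuousOn B s) :
    ContinuousOn (fun p => A p * B p) s := by
  rw [continuousOn_iff_continuous_restrict] at *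
  exact hA.matrix_mul hB

lemma contOn_matrix_mulVec {X : Type*} [TopologicalSpace X] {l m : ℕ} {s : Set X}
    {A : X → Matrix (Fin l) (Fin m) ℝ} {v : X → Fin m → ℝ}
    (hA : ContinuousOn A s) (hv : ContinuousOn v s) :
    ContinuousOn (fun p => A p *ᵥ v p) s := by
  rw [continuousOn_iff_continuous_restrict] at *
  exact hA.matrix_mulVec hv

lemma contOn_dotProduct {X : Type*} [TopologicalSpace X] {m : ℕ} {s : Set X}
    {v w : X → Fin m → ℝ} (hv : ContinuousOn v s) (hw : ContinuousOn w s) :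
    ContinuousOn (fun p => v p ⬝ᵥ w p) s := by
  rw [continuousOn_iff_continuous_restrict] at *
  exact hv.dotProduct hw

end Stmt15Aux
open Stmt15Aux

theorem stmt_15 (d n N : ℕ) (hd : 0 < d) (hn : 0 < n) (hdn : d ≤ n)
    (σ : ℝ) (hσ : 0 < σ)
    (x : Fin N → Fin n → ℝ) (β : Fin N → ℝ) (hβ : ∀ i, 0 < β i)
    (hSpos : ∀ b : Fin n → ℝ, (sMat x β b).PosDef) :
    ∃ (Uhat : Matrix (Fin n) (Fin d) ℝ) (bhat : Fin n → ℝ), Uhatᵀ * Uhat = 1 ∧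
      ∀ (U : Matrix (Fin n) (Fin d) ℝ) (b : Fin n → ℝ), Uᵀ * U = 1 →
        gFun σ x β Uhat bhat ≤ gFun σ x β U b := by
  classical
  -- N is positive
  have hNpos : 0 < N := by
    rcases Nat.eq_zero_or_pos N with h0 | h
    · exfalso
      subst h0
      have hpd := hSpos 0
      have hz : (Pi.single (⟨0, hn⟩ : Fin n) 1 : Fin n → ℝ) ≠ 0 := by
        intro h
        have := congrFun h ⟨0, hn⟩
        simp at this
      have h2 := (posDef_iff_dotProduct_mulVec.mp hpd).2 hz
      have h3 : sMat x β (0 : Fin n → ℝ) = 0 := by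
        ext i j
        simp [sMat, mVec, vecMulVec_apply, Finset.univ_eq_empty]
      rw [h3] at h2
      simp at h2
    · exact h
  have hApos : (0:ℝ) < ∑ i, β i :=
    Finset.sum_pos (fun i _ => hβ i) ⟨⟨0, hNpos⟩, Finset.mem_univ _⟩
  have hσ2 : (0:ℝ) < (σ ^ 2)⁻¹ := by positivity
  -- upper quad bound for Sm
  obtain ⟨L, hL, hub⟩ := exists_upper_bound (A := sMat x β ((∑ i, β i)⁻¹ • mVec x β))
  -- the Stiefel manifold is compact and nonempty
  have hKclosed : IsClosed {U : Matrix (Fin n) (Fin d) ℝ | Uᵀ * U = 1} :=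
    isClosed_eq (continuous_id.matrix_transpose.matrix_mul continuous_id) continuous_const
  have hKcomp : IsCompact {U : Matrix (Fin n) (Fin d) ℝ | Uᵀ * U = 1} := by
    refine IsCompact.of_isClosed_subset
      (isCompact_univ_pi fun _ : Fin n =>
        (isCompact_univ_pi fun _ : Fin d => isCompact_Icc (a := (-1:ℝ)) (b := 1)))
      hKclosed ?_
    intro U hU
    have hU' : Uᵀ * U = 1 := hU
    intro i _
    intro j _
    have hdiag : (∑ k, U k j * U k j) = 1 := by
      have h5 := congrFun (congrFun hU' j) j
      simpa [Matrix.mul_apply, Matrix.one_apply] using h5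
    have h1 : U i j * U i j ≤ 1 := by
      rw [← hdiag]
      exact Finset.single_le_sum (f := fun l : Fin n => U l j * U l j)
        (fun l _ => mul_self_nonneg _) (Finset.mem_univ i)
    rw [Set.mem_Icc]
    constructor <;> nlinarith
  set U₀ : Matrix (Fin n) (Fin d) ℝ :=
    Matrix.of (fun i (j : Fin d) => if (i : ℕ) = (j : ℕ) then (1:ℝ) else 0) with hU0def
  have hU₀ : U₀ᵀ * U₀ = 1 := by
    ext j k
    simp only [Matrix.mul_apply, Matrix.transpose_apply, hU0def, Matrix.of_apply]
    rw [Finset.sum_eq_single (Fin.castLE hdn j)]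
    · simp [Matrix.one_apply, Fin.ext_iff]
    · intro i _ hi
      have h6 : (i : ℕ) ≠ (j : ℕ) := by
        intro h
        exact hi (Fin.ext (by simpa using h))
      simp [h6]
    · intro h
      exact absurd (Finset.mem_univ _) h
  have hKne : {U : Matrix (Fin n) (Fin d) ℝ | Uᵀ * U = 1}.Nonempty := ⟨U₀, hU₀⟩
  -- minimum of the determinant on the Stiefel manifold
  have hdetcont : Continuous fun U : Matrix (Fin n) (Fin d) ℝ =>
      (Uᵀ * sMat x β ((∑ i, β i)⁻¹ • mVec x β) * U).det :=
    ((continuous_id.matrix_transpose.matrix_mul continuous_const).matrix_mul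
      continuous_id).matrix_det
  obtain ⟨Uc, hUcK, hUcmin⟩ := hKcomp.exists_isMinOn hKne hdetcont.continuousOn
  have hUcK' : Ucᵀ * Uc = 1 := hUcK
  have hc₀pos : 0 < (Ucᵀ * sMat x β ((∑ i, β i)⁻¹ • mVec x β) * Uc).det :=
    (posdef_conj (hSpos _) hUcK').det_pos
  have hdetlow : ∀ U : Matrix (Fin n) (Fin d) ℝ, Uᵀ * U = 1 →
      (Ucᵀ * sMat x β ((∑ i, β i)⁻¹ • mVec x β) * Uc).det
        ≤ (Uᵀ * sMat x β ((∑ i, β i)⁻¹ • mVec x β) * U).det :=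
    fun U hU => isMinOn_iff.mp hUcmin U hU
  have key := fun (U : Matrix (Fin n) (Fin d) ℝ) (b : Fin n → ℝ) (hU : Uᵀ * U = 1) =>
    gFun_lower_bound σ x β (ne_of_gt hσ) hApos hSpos hL hc₀pos hub hdetlow U b hU
  -- abbreviations (set rewrites the context too)
  set a : ℝ := ∑ i, β i with hadef
  set cvec : Fin n → ℝ := a⁻¹ • mVec x β with hcvecdef
  set c₀ : ℝ := (Ucᵀ * sMat x β cvec * Uc).det with hc0def
  set B₀ : ℝ := gFun σ x β U₀ cvec with hB0def
  set C₂ : ℝ := -(σ ^ 2)⁻¹ * (L * d) - a + a * Real.log c₀ with hC2def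
  set B' : ℝ := max (B₀ - C₂ + 1) 1 with hB'def
  have hB'pos : 0 < B' := lt_of_lt_of_le one_pos (le_max_right _ _)
  have hB'ge : B₀ - C₂ + 1 ≤ B' := le_max_left _ _
  set R : ℝ := max (2 * σ ^ 2 * B' / a) (2 * L / a * (Real.exp (B' / a) - 1)) with hRdef
  have hR1 : 0 < 2 * σ ^ 2 * B' / a := by positivity
  have hR0 : 0 ≤ R := le_trans hR1.le (le_max_left _ _)
  -- escape bound: far away from cvec, gFun is larger than B₀
  have hescape : ∀ (U : Matrix (Fin n) (Fin d) ℝ) (b : Fin n → ℝ), Uᵀ * U = 1 →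
      R < ns (b - cvec) → B₀ < gFun σ x β U b := by
    intro U b hU hrR
    have hkey := key U b hU
    have hsr : ns (Uᵀ *ᵥ (b - cvec)) ≤ ns (b - cvec) := ns_transpose_mulVec_le hU _
    have hs0 : 0 ≤ ns (Uᵀ *ᵥ (b - cvec)) := ns_nonneg _
    set s : ℝ := ns (Uᵀ *ᵥ (b - cvec)) with hsdef
    set r : ℝ := ns (b - cvec) with hrdef
    clear_value a cvec c₀ B₀ C₂ B' R s r
    rcases le_or_gt s (r / 2) with hcase | hcase
    · have hlog0 : 0 ≤ Real.log (1 + a * s / L) := by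
        apply Real.log_nonneg
        have h7 : 0 ≤ a * s / L := by positivity
        linarith
      have hRge : 2 * σ ^ 2 * B' / a ≤ R := by rw [hRdef]; exact le_max_left _ _
      have hr' : 2 * σ ^ 2 * B' / a < r := lt_of_le_of_lt hRge hrR
      have h3 : 2 * σ ^ 2 * B' < r * a := by
        rw [div_lt_iff₀ hApos] at hr'
        exact hr'
      have hinv : (σ ^ 2)⁻¹ * σ ^ 2 = 1 := inv_mul_cancel₀ (by positivity)
      have h2 : B' < (σ ^ 2)⁻¹ * a * (r - s) := by
        have h4 := mul_lt_mul_of_pos_left h3 hσ2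
        have h11 : (σ ^ 2)⁻¹ * (2 * σ ^ 2 * B') = 2 * B' := by
          field_simp
        have h10 : 0 ≤ (σ ^ 2)⁻¹ * a * (r - s - r / 2) :=
          mul_nonneg (mul_nonneg hσ2.le hApos.le) (by linarith)
        rw [h11] at h4
        nlinarith [h4, h10]
      have h8 : 0 ≤ a * Real.log (1 + a * s / L) := mul_nonneg hApos.le hlog0
      linarith [hkey, hC2def]
    · have h1 : 0 ≤ (σ ^ 2)⁻¹ * a * (r - s) := by
        apply mul_nonneg (mul_nonneg hσ2.le hApos.le)
        linarith
      have hRge2 : 2 * L / a * (Real.exp (B' / a) - 1) ≤ R := by rw [hRdef]; exact le_max_right _ _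
      have hr2 : 2 * L / a * (Real.exp (B' / a) - 1) < r := lt_of_le_of_lt hRge2 hrR
      have hsplit : 2 * L / a * (Real.exp (B' / a) - 1)
          = 2 * (L / a * (Real.exp (B' / a) - 1)) := by ring
      have hs2 : L / a * (Real.exp (B' / a) - 1) < s := by
        rw [hsplit] at hr2
        linarith
      have hcanc : a / L * (L / a * (Real.exp (B' / a) - 1)) = Real.exp (B' / a) - 1 := by
        field_simp
      have hmul := mul_lt_mul_of_pos_left hs2 (show (0:ℝ) < a / L by positivity)
      rw [hcanc] at hmul
      have hconv : a / L * s = a * s / L := by ring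
      have harg : Real.exp (B' / a) < 1 + a * s / L := by
        rw [hconv] at hmul
        linarith
      have hargpos : (0:ℝ) < 1 + a * s / L := lt_trans (Real.exp_pos _) harg
      have hlog : B' / a < Real.log (1 + a * s / L) :=
        (Real.lt_log_iff_exp_lt hargpos).mpr harg
      have hfold : a * (B' / a) = B' := by field_simp
      have hlog' : B' < a * Real.log (1 + a * s / L) := by
        have h9 := mul_lt_mul_of_pos_left hlog hApos
        rwa [hfold] at h9
      linarith [hkey, hC2def]
  -- the compact box
  have hBoxclosed : IsClosed {b : Fin n → ℝ | ns (b - cvec) ≤ R} :=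
    isClosed_le (continuous_ns.comp (continuous_id.sub continuous_const)) continuous_const
  have hBoxcomp : IsCompact {b : Fin n → ℝ | ns (b - cvec) ≤ R} := by
    refine IsCompact.of_isClosed_subset
      (isCompact_univ_pi fun i : Fin n =>
        isCompact_Icc (a := cvec i - Real.sqrt R) (b := cvec i + Real.sqrt R))
      hBoxclosed ?_
    intro b hb
    have hb' : ns (b - cvec) ≤ R := hb
    intro i _
    have h1 : (b i - cvec i) * (b i - cvec i) ≤ ns (b - cvec) := by
      have h2 : (b - cvec) i = b i - cvec i := rfl
      simp only [ns, dotProduct]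
      calc (b i - cvec i) * (b i - cvec i) = (b - cvec) i * (b - cvec) i := by rw [h2]
      _ ≤ ∑ j, (b - cvec) j * (b - cvec) j :=
          Finset.single_le_sum (f := fun j : Fin n => (b - cvec) j * (b - cvec) j)
            (fun j _ => mul_self_nonneg _) (Finset.mem_univ i)
    have h3 : (b i - cvec i) ^ 2 ≤ R := by nlinarith
    have h4 := Real.abs_le_sqrt h3
    rw [abs_le] at h4
    rw [Set.mem_Icc]
    constructor <;> linarith [h4.1, h4.2]
  have hOcomp : IsCompact (({U : Matrix (Fin n) (Fin d) ℝ | Uᵀ * U = 1}) ×ˢ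
      {b : Fin n → ℝ | ns (b - cvec) ≤ R}) := hKcomp.prod hBoxcomp
  have hOne : (U₀, cvec) ∈ ({U : Matrix (Fin n) (Fin d) ℝ | Uᵀ * U = 1}) ×ˢ
      {b : Fin n → ℝ | ns (b - cvec) ≤ R} := by
    constructor
    · exact hU₀
    · show ns (cvec - cvec) ≤ R
      simpa [ns, sub_self] using hR0
  -- continuity of gFun on the set where the determinant is nonzero
  have hGD : ContinuousOn (fun p : Matrix (Fin n) (Fin d) ℝ × (Fin n → ℝ) =>
      gFun σ x β p.1 p.2)
      {p : Matrix (Fin n) (Fin d) ℝ × (Fin n → ℝ) |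
        (p.1ᵀ * sMat x β p.2 * p.1).det ≠ 0} := by
    have hS : Continuous fun p : Matrix (Fin n) (Fin d) ℝ × (Fin n → ℝ) => sMat x β p.2 :=
      (continuous_sMat x β).comp continuous_snd
    have hv : Continuous fun p : Matrix (Fin n) (Fin d) ℝ × (Fin n → ℝ) => vVec x β p.2 :=
      (continuous_vVec x β).comp continuous_snd
    have hM : Continuous fun p : Matrix (Fin n) (Fin d) ℝ × (Fin n → ℝ) =>
        p.1ᵀ * sMat x β p.2 * p.1 :=
      (Continuous.matrix_mul (continuous_fst.matrix_transpose.matrix_mul hS) continuous_fst)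
    have hdet := hM.matrix_det
    have htrc := hM.matrix_trace
    have hinv : ContinuousOn (fun p : Matrix (Fin n) (Fin d) ℝ × (Fin n → ℝ) =>
        (p.1ᵀ * sMat x β p.2 * p.1)⁻¹)
        {p : Matrix (Fin n) (Fin d) ℝ × (Fin n → ℝ) |
          (p.1ᵀ * sMat x β p.2 * p.1).det ≠ 0} := by
      have heq : (fun p : Matrix (Fin n) (Fin d) ℝ × (Fin n → ℝ) =>
          (p.1ᵀ * sMat x β p.2 * p.1)⁻¹)
          = fun p => ((p.1ᵀ * sMat x β p.2 * p.1).det)⁻¹ •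
              (p.1ᵀ * sMat x β p.2 * p.1).adjugate := by
        funext p
        rw [Matrix.inv_def, Ring.inverse_eq_inv']
      rw [heq]
      exact ((hdet.continuousOn.inv₀ fun p hp => hp).smul
        hM.matrix_adjugate.continuousOn)
    have hmid : ContinuousOn (fun p : Matrix (Fin n) (Fin d) ℝ × (Fin n → ℝ) =>
        vVec x β p.2 ⬝ᵥ ((p.1 * (p.1ᵀ * sMat x β p.2 * p.1)⁻¹ * p.1ᵀ) *ᵥ vVec x β p.2))
        {p : Matrix (Fin n) (Fin d) ℝ × (Fin n → ℝ) |
          (p.1ᵀ * sMat x β p.2 * p.1).det ≠ 0} :=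
      contOn_dotProduct hv.continuousOn
        (contOn_matrix_mulVec
          (contOn_matrix_mul
            (contOn_matrix_mul continuous_fst.continuousOn hinv)
            continuous_fst.matrix_transpose.continuousOn)
          hv.continuousOn)
    have hlog : ContinuousOn (fun p : Matrix (Fin n) (Fin d) ℝ × (Fin n → ℝ) =>
        Real.log ((p.1ᵀ * sMat x β p.2 * p.1).det))
        {p : Matrix (Fin n) (Fin d) ℝ × (Fin n → ℝ) |
          (p.1ᵀ * sMat x β p.2 * p.1).det ≠ 0} :=
      Real.continuousOn_log.comp hdet.continuousOn fun p hp => hp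
    simp only [gFun]
    refine ContinuousOn.add (ContinuousOn.sub ?_ hmid) (continuousOn_const.mul hlog)
    exact (continuous_const.mul
      (htrc.sub ((hv.dotProduct hv).div_const _))).continuousOn
  have hsub : (({U : Matrix (Fin n) (Fin d) ℝ | Uᵀ * U = 1}) ×ˢ
      {b : Fin n → ℝ | ns (b - cvec) ≤ R}) ⊆
      {p : Matrix (Fin n) (Fin d) ℝ × (Fin n → ℝ) |
        (p.1ᵀ * sMat x β p.2 * p.1).det ≠ 0} := by
    intro p hp
    have h1 : p.1ᵀ * p.1 = 1 := hp.1
    exact (posdef_conj (hSpos p.2) h1).det_pos.ne'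
  obtain ⟨phat, hphat, hmin⟩ := hOcomp.exists_isMinOn ⟨(U₀, cvec), hOne⟩ (hGD.mono hsub)
  refine ⟨phat.1, phat.2, hphat.1, ?_⟩
  intro U b hU
  rcases le_or_gt (ns (b - cvec)) R with hb | hb
  · exact isMinOn_iff.mp hmin (U, b) ⟨hU, hb⟩
  · have h1 := hescape U b hU hb
    have h2 : gFun σ x β phat.1 phat.2 ≤ B₀ := by
      have h3 := isMinOn_iff.mp hmin (U₀, cvec) hOne
      rw [hB0def]
      exact h3
    linarith
end
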